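/- Let H : Set → Set be a functor with no distinguished elements. Then H preserves finite intersections, i.e., H preserves every pullback of two injective maps into a common codomain. -/

import Mathlib

open CategoryTheory Limits

/-- An element `x ∈ H X` is distinguished if any parallel pair of maps is merged by `H` at `x`. -/
def Distinguished (H : Type u ⥤ Type u) {X : Type u} (x : H.obj X) : Prop :=
  ∀ (Y : Type u) (f g : X ⟶ Y), H.map f x = H.map g x

theorem stmt14 (H : Type u ⥤ Type u)
    (hnd : ∀ (X : Type u) (x : H.obj X), ¬ Distinguished H x)
    {P A B B' : Type u} (fst : P ⟶ B) (snd : P ⟶ B') (m : B ⟶ A) (m' : B' ⟶ A)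
    (hm : Function.Injective m) (hm' : Function.Injective m')
    (hpb : IsPullback fst snd m m') :
    IsPullback (H.map fst) (H.map snd) (H.map m) (H.map m') := by
  classical
  -- H preserves injectivity of maps with nonempty domain
  have key : ∀ {X Y : Type u} (f : X ⟶ Y), Function.Injective f → Nonempty X →
      Function.Injective (H.map f) := by
    intro X Y f hf hX
    obtain ⟨r, hr⟩ := hf.hasLeftInverse
    intro a b hab
    have : H.map f ≫ H.map (TypeCat.ofHom r) = 𝟙 _ := by
      rw [← H.map_comp, ← H.map_id]
      congr 1
      ext x
      exact hr x
    calc a = (H.map f ≫ H.map (TypeCat.ofHom r)) a := by rw [this]; rfl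
      _ = (H.map f ≫ H.map (TypeCat.ofHom r)) b := by simp only [types_comp_apply, hab]
      _ = b := by rw [this]; rfl
  have hw : ∀ p : P, m (fst p) = m' (snd p) := fun p => ConcreteCategory.congr_hom hpb.w p
  -- lifting property of the pullback
  have hlift : ∀ (b : B) (b' : B'), m b = m' b' → ∃ p : P, fst p = b ∧ snd p = b' := by
    intro b b' h
    refine ⟨(PullbackCone.IsLimit.equivPullbackObj hpb.isLimit).symm ⟨(b, b'), h⟩, ?_, ?_⟩
    · exact PullbackCone.IsLimit.equivPullbackObj_symm_apply_fst hpb.isLimit ⟨(b, b'), h⟩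
    · exact PullbackCone.IsLimit.equivPullbackObj_symm_apply_snd hpb.isLimit ⟨(b, b'), h⟩
  have comm : CommSq (H.map fst) (H.map snd) (H.map m) (H.map m') :=
    ⟨by rw [← H.map_comp, ← H.map_comp, hpb.w]⟩
  apply IsPullback.of_isLimit' comm
  refine (PullbackCone.isLimitEquivBijective comm.cone).symm ?_
  by_cases hP : Nonempty P
  · -- nonempty intersection case
    obtain ⟨p₀⟩ := hP
    have hfst : Function.Injective fst := by
      intro p q h
      have h2 : snd p = snd q := hm' (by rw [← hw, ← hw, h])
      exact PullbackCone.IsLimit.type_ext hpb.isLimit h h2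
    set q₁ : B ⟶ P := TypeCat.ofHom fun b => if h : ∃ p : P, fst p = b then h.choose else p₀ with hq₁
    set p₂ : A ⟶ A := TypeCat.ofHom fun a => if ∃ b' : B', m' b' = a then a else m (fst p₀) with hp₂
    have e1 : m' ≫ p₂ = m' := by
      ext b'
      simp only [TypeCat.Fun.toFun_apply, types_comp_apply, hp₂, TypeCat.ofHom_apply]
      rw [if_pos ⟨b', rfl⟩]
    have e2 : (q₁ ≫ fst) ≫ m = m ≫ p₂ := by
      ext b
      simp only [TypeCat.Fun.toFun_apply, types_comp_apply, hq₁, hp₂, TypeCat.ofHom_apply]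
      by_cases h : ∃ p : P, fst p = b
      · rw [dif_pos h, h.choose_spec,
          if_pos ⟨snd h.choose, by rw [← hw, h.choose_spec]⟩]
      · rw [dif_neg h, if_neg]
        rintro ⟨b', hb'⟩
        obtain ⟨p, hp, -⟩ := hlift b b' hb'.symm
        exact h ⟨p, hp⟩
    have e3 : (q₁ ≫ snd) ≫ m' = m ≫ p₂ := by
      ext b
      simp only [TypeCat.Fun.toFun_apply, types_comp_apply, hq₁, hp₂, TypeCat.ofHom_apply]
      by_cases h : ∃ p : P, fst p = b
      · rw [dif_pos h, ← hw, h.choose_spec,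
          if_pos ⟨snd h.choose, by rw [← hw, h.choose_spec]⟩]
      · rw [dif_neg h, ← hw, if_neg]
        rintro ⟨b', hb'⟩
        obtain ⟨p, hp, -⟩ := hlift b b' hb'.symm
        exact h ⟨p, hp⟩
    have hHfst : Function.Injective (H.map fst) := key fst hfst ⟨p₀⟩
    constructor
    · intro z z' h
      have h1 := congr_arg (fun t : Types.PullbackObj (H.map m) (H.map m') => t.1.1) h
      exact hHfst h1
    · rintro ⟨⟨x, y⟩, hxy⟩
      refine ⟨H.map q₁ x, ?_⟩
      have hx : H.map fst (H.map q₁ x) = x := by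
        apply key m hm ⟨fst p₀⟩
        have : H.map m (H.map fst (H.map q₁ x)) = H.map ((q₁ ≫ fst) ≫ m) x := by
          simp [H.map_comp]
        rw [this, e2, H.map_comp, types_comp_apply, hxy, ← types_comp_apply (H.map m') (H.map p₂),
          ← H.map_comp, e1, ← hxy]
      have hy : H.map snd (H.map q₁ x) = y := by
        apply key m' hm' ⟨snd p₀⟩
        have : H.map m' (H.map snd (H.map q₁ x)) = H.map ((q₁ ≫ snd) ≫ m') x := by
          simp [H.map_comp]
        rw [this, e3, H.map_comp, types_comp_apply, hxy, ← types_comp_apply (H.map m') (H.map p₂),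
          ← H.map_comp, e1]
      apply Subtype.ext
      exact Prod.ext hx hy
  · -- empty intersection case
    have hHP : ∀ z : H.obj P, False := by
      intro z
      apply hnd P z
      intro Y f g
      have : f = g := ConcreteCategory.hom_ext _ _ fun p => absurd ⟨p⟩ hP
      rw [this]
    have hdisj : ∀ (b : B) (b' : B'), m b ≠ m' b' := by
      intro b b' h
      obtain ⟨p, -⟩ := hlift b b' h
      exact hP ⟨p⟩
    have hnopair : ∀ (x : H.obj B) (y : H.obj B'), H.map m x ≠ H.map m' y := by
      intro x y hxy
      apply hnd PUnit (H.map (TypeCat.ofHom fun _ : A => PUnit.unit) (H.map m x))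
      intro Y f g
      set h : A ⟶ Y := TypeCat.ofHom fun a => if ∃ b : B, m b = a then f PUnit.unit else g PUnit.unit
        with hh
      have hmh : m ≫ h = TypeCat.ofHom fun _ : B => f PUnit.unit := by
        ext b
        simp only [TypeCat.Fun.toFun_apply, types_comp_apply, hh, TypeCat.ofHom_apply]
        rw [if_pos ⟨b, rfl⟩]
      have hm'h : m' ≫ h = TypeCat.ofHom fun _ : B' => g PUnit.unit := by
        ext b'
        simp only [TypeCat.Fun.toFun_apply, types_comp_apply, hh, TypeCat.ofHom_apply]
        rw [if_neg]
        rintro ⟨b, hb⟩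
        exact hdisj b b' hb
      have h1 : H.map f (H.map (TypeCat.ofHom fun _ : A => PUnit.unit) (H.map m x)) = H.map h (H.map m x) := by
        calc H.map f (H.map (TypeCat.ofHom fun _ : A => PUnit.unit) (H.map m x))
            = H.map (m ≫ (TypeCat.ofHom fun _ : A => PUnit.unit) ≫ f) x := by
              simp only [H.map_comp, types_comp_apply]
          _ = H.map (m ≫ h) x := by
              rw [show m ≫ (TypeCat.ofHom fun _ : A => PUnit.unit) ≫ f = m ≫ h from by rw [hmh]; rfl]
          _ = H.map h (H.map m x) := by
              simp only [H.map_comp, types_comp_apply]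
      have h2 : H.map g (H.map (TypeCat.ofHom fun _ : A => PUnit.unit) (H.map m x)) = H.map h (H.map m x) := by
        calc H.map g (H.map (TypeCat.ofHom fun _ : A => PUnit.unit) (H.map m x))
            = H.map ((TypeCat.ofHom fun _ : A => PUnit.unit) ≫ g) (H.map m' y) := by
              rw [← hxy]
              simp only [H.map_comp, types_comp_apply]
          _ = H.map (m' ≫ (TypeCat.ofHom fun _ : A => PUnit.unit) ≫ g) y := by
              simp only [H.map_comp, types_comp_apply]
          _ = H.map (m' ≫ h) y := by
              rw [show m' ≫ (TypeCat.ofHom fun _ : A => PUnit.unit) ≫ g = m' ≫ h from by rw [hm'h]; rfl]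
          _ = H.map h (H.map m x) := by
              rw [hxy]
              simp only [H.map_comp, types_comp_apply]
      rw [h1, h2]
    constructor
    · intro z z' _
      exact absurd (hHP z) (fun h => h)
    · rintro ⟨⟨x, y⟩, hxy⟩
      exact absurd hxy (hnopair x y)
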